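/- Let n ≥ 3 be an integer and write C = binomial(n,2) = n(n−1)/2. Let q be a prime power coprime to n!, and let d be a positive integer divisible by q satisfying (C−1)·q^n + (n!−C)·q^{n−1} + (2^n+1)·n! ≤ d. Then there exist integers i, j, k with 0 ≤ i ≤ C−1, 0 ≤ j ≤ n!−C, C dividing j, k ≥ 2^n+1, q dividing k, and d = i·q^n + j·q^{n−1} + k·n!. -/

import Mathlib

theorem decomposition_with_binomial
    (n : ℕ) (hn : 3 ≤ n) (C : ℕ) (hC : C = n.choose 2)
    (q : ℕ) (hq : IsPrimePow q) (hqcop : Nat.Coprime q (Nat.factorial n))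
    (d : ℕ) (hd : 0 < d) (hqd : q ∣ d)
    (hle : (C - 1) * q ^ n + (Nat.factorial n - C) * q ^ (n - 1)
      + (2 ^ n + 1) * Nat.factorial n ≤ d) :
    ∃ i j k : ℕ, i ≤ C - 1 ∧ j ≤ Nat.factorial n - C ∧ C ∣ j ∧ 2 ^ n + 1 ≤ k ∧ q ∣ k ∧
      d = i * q ^ n + j * q ^ (n - 1) + k * Nat.factorial n := by
  have hq2 : 2 ≤ q := hq.two_le
  obtain ⟨F, hF⟩ : ∃ F, F = Nat.factorial n := ⟨_, rfl⟩
  obtain ⟨Q, hQ⟩ : ∃ Q, Q = q ^ (n - 1) := ⟨_, rfl⟩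
  obtain ⟨P, hP⟩ : ∃ P, P = q ^ n := ⟨_, rfl⟩
  obtain ⟨s0, hs0⟩ : ∃ s0, s0 = 2 ^ n := ⟨_, rfl⟩
  obtain ⟨s, hs⟩ : ∃ s, s = s0 + 1 := ⟨_, rfl⟩
  rw [← hF, ← hQ, ← hP, ← hs0, ← hs] at hle ⊢
  have hqn : P = q * Q := by
    rw [hQ, hP, ← pow_succ']
    congr 1
    omega
  have hQ4 : 4 ≤ Q := by
    rw [hQ]
    calc (4:ℕ) = 2^2 := rfl
    _ ≤ q^2 := Nat.pow_le_pow_left hq2 2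
    _ ≤ q^(n-1) := Nat.pow_le_pow_right (by omega) (by omega)
  have hQ1 : 1 < Q := by omega
  -- C facts
  have hC3 : 3 ≤ C := by
    rw [hC]
    calc (3:ℕ) = Nat.choose 3 2 := rfl
    _ ≤ n.choose 2 := Nat.choose_le_choose 2 hn
  have hCF : C ∣ F := by
    refine ⟨Nat.factorial 2 * Nat.factorial (n-2), ?_⟩
    rw [hC, hF, ← mul_assoc, Nat.choose_mul_factorial_mul_factorial (by omega)]
  have hFpos : 0 < F := by rw [hF]; exact Nat.factorial_pos n
  have hCleF : C ≤ F := Nat.le_of_dvd hFpos hCF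
  have hqF : Nat.Coprime q F := by rw [hF]; exact hqcop
  have hqC : Nat.Coprime q C := Nat.Coprime.coprime_dvd_right hCF hqF
  -- inverses
  obtain ⟨u, hu⟩ : ∃ u, F * u % Q = 1 := by
    refine (Nat.exists_mul_mod_eq_one_of_coprime ?_ hQ1).imp fun _ h => h.2
    rw [hQ]
    exact hqF.symm.pow_right (n-1)
  obtain ⟨v, hv⟩ : ∃ v, q * v % C = 1 :=
    (Nat.exists_mul_mod_eq_one_of_coprime hqC (by omega)).imp fun _ h => h.2
  -- construction of k0
  obtain ⟨r, hr⟩ : ∃ r, r = d * u % Q := ⟨_, rfl⟩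
  have hrQ : r < Q := by rw [hr]; exact Nat.mod_lt _ (by omega)
  obtain ⟨t, ht⟩ : ∃ t, t = (s - r + Q - 1) / Q := ⟨_, rfl⟩
  obtain ⟨k0, hk0⟩ : ∃ k0, k0 = r + Q * t := ⟨_, rfl⟩
  have hA : Q * t + (s - r + Q - 1) % Q = s - r + Q - 1 := by
    rw [ht]; exact Nat.div_add_mod _ _
  have hA2 : (s - r + Q - 1) % Q < Q := Nat.mod_lt _ (by omega)
  have hdisj : Q * t = 0 ∨ Q ≤ Q * t := by
    rcases Nat.eq_zero_or_pos t with h | h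
    · left; simp [h]
    · right; exact Nat.le_mul_of_pos_right Q h
  clear ht
  have hk0lb : s ≤ k0 := by rcases hdisj with h | h <;> omega
  have hk0ub : k0 ≤ s0 + Q := by
    rcases hdisj with h | h <;> omega
  -- q divides k0
  have hqQ : q ∣ Q := by rw [hQ]; exact dvd_pow_self q (by omega)
  have hqr : q ∣ r := by
    rw [hr]; exact (Nat.dvd_mod_iff hqQ).mpr (Dvd.dvd.mul_right hqd u)
  have hqk0 : q ∣ k0 := by
    rw [hk0]; exact Nat.dvd_add hqr (Dvd.dvd.mul_right hqQ t)
  -- k0 * F ≡ d [MOD Q]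
  have hk0r : k0 ≡ d * u [MOD Q] := by
    show k0 % Q = (d * u) % Q
    rw [hk0, hr]
    simp [Nat.add_mul_mod_self_left, Nat.mul_mod_right, Nat.mod_mod_of_dvd]
  have hu' : F * u ≡ 1 [MOD Q] := by
    show F * u % Q = 1 % Q
    rw [Nat.mod_eq_of_lt hQ1, hu]
  have hmod : k0 * F ≡ d [MOD Q] := by
    calc k0 * F ≡ d * u * F [MOD Q] := hk0r.mul_right F
    _ = d * (F * u) := by ring
    _ ≡ d * 1 [MOD Q] := Nat.ModEq.mul_left d hu'
    _ = d := by ring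
  -- arithmetic setup: E and F'
  obtain ⟨C1, hC1⟩ : ∃ C1, C = C1 + 1 := ⟨C - 1, by omega⟩
  have hcq : C ≤ C1 * q := by
    have : C1 * 2 ≤ C1 * q := Nat.mul_le_mul_left C1 hq2
    omega
  obtain ⟨E, hE'⟩ : ∃ E, C + E = C1 * q := ⟨C1 * q - C, by omega⟩
  obtain ⟨F', hF''⟩ : ∃ F', C + F' = F := ⟨F - C, by omega⟩
  -- key bound: k0 * F + (E * Q + F) ≤ d
  have hleE : C1 * P + F' * Q + s * F ≤ d := by
    have e1 : C - 1 = C1 := by omega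
    have e2 : F - C = F' := by omega
    rw [e1, e2] at hle
    exact hle
  have key : (s0 + Q) * F + (E * Q + F) ≤ d := by
    calc (s0 + Q) * F + (E * Q + F) = C1 * P + F' * Q + s * F := by
          rw [hqn, ← mul_assoc, ← hE', ← hF'', hs]
          ring
    _ ≤ d := hleE
  have hk0Fd : k0 * F + (E * Q + F) ≤ d := by
    have h2 : k0 * F ≤ (s0 + Q) * F := Nat.mul_le_mul_right F hk0ub
    omega
  -- the quotient D1
  have hQdvd : Q ∣ d - k0 * F := (Nat.modEq_iff_dvd' (by omega)).mp hmod
  obtain ⟨D1, hD1Q⟩ : ∃ D1, D1 * Q = d - k0 * F := by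
    obtain ⟨c, hc⟩ := hQdvd
    exact ⟨c, by rw [hc]; exact Nat.mul_comm c Q⟩
  have hD1lb : E + 1 ≤ D1 := by
    have h1 : E * Q + 1 ≤ D1 * Q := by omega
    by_contra hcon
    have h2 : D1 ≤ E := by omega
    have : D1 * Q ≤ E * Q := Nat.mul_le_mul_right Q h2
    omega
  -- choose i
  obtain ⟨i, hi⟩ : ∃ i, i = D1 * v % C := ⟨_, rfl⟩
  have hiC : i < C := by rw [hi]; exact Nat.mod_lt _ (by omega)
  have hv' : q * v ≡ 1 [MOD C] := by
    show q * v % C = 1 % C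
    rw [Nat.mod_eq_of_lt (by omega : 1 < C), hv]
  have hiq : i * q ≡ D1 [MOD C] := by
    calc i * q ≡ D1 * v * q [MOD C] := by
          refine Nat.ModEq.mul_right q ?_
          show i % C = (D1 * v) % C
          rw [hi]; simp [Nat.mod_mod_of_dvd]
    _ = D1 * (q * v) := by ring
    _ ≡ D1 * 1 [MOD C] := Nat.ModEq.mul_left D1 hv'
    _ = D1 := by ring
  have hiqD1 : i * q ≤ D1 := by
    by_contra hcon
    have hdvdZ : (C:ℤ) ∣ (i:ℤ) * q - (D1:ℤ) := by
      have := hiq.dvd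
      push_cast at this ⊢
      exact dvd_sub_comm.mp this
    have hpos : (0:ℤ) < (i:ℤ) * q - (D1:ℤ) := by
      have : (D1:ℤ) < (i:ℤ) * q := by exact_mod_cast by omega
      omega
    have hge := Int.le_of_dvd hpos hdvdZ
    have hub : (i:ℤ) * q ≤ (C1:ℤ) * q := by
      exact_mod_cast Nat.mul_le_mul_right q (by omega : i ≤ C1)
    have hD1c : (E:ℤ) + 1 ≤ (D1:ℤ) := by exact_mod_cast hD1lb
    have hEc : (C:ℤ) + E = (C1:ℤ) * q := by exact_mod_cast hE'
    omega
  have hCdvd : C ∣ D1 - i * q := (Nat.modEq_iff_dvd' hiqD1).mp hiq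
  -- final pieces
  obtain ⟨J, hJ⟩ : ∃ J, J = D1 - i * q := ⟨_, rfl⟩
  obtain ⟨j, hj⟩ : ∃ j, j = J % F := ⟨_, rfl⟩
  obtain ⟨t2, ht2⟩ : ∃ t2, t2 = J / F := ⟨_, rfl⟩
  have hJ2 : F * t2 + j = J := by rw [hj, ht2]; exact Nat.div_add_mod J F
  have hjF : j < F := by rw [hj]; exact Nat.mod_lt _ hFpos
  have hCj : C ∣ j := by
    rw [hj]; exact (Nat.dvd_mod_iff hCF).mpr (hJ ▸ hCdvd)
  have hjle : j ≤ F - C := by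
    have h1 : C ∣ F - j := Nat.dvd_sub hCF hCj
    have h2 : C ≤ F - j := Nat.le_of_dvd (by omega) h1
    omega
  refine ⟨i, j, k0 + t2 * Q, by omega, hjle, hCj, by omega,
    Nat.dvd_add hqk0 (Dvd.dvd.mul_left hqQ t2), ?_⟩
  have hfin : d = D1 * Q + k0 * F := by omega
  rw [hfin, hqn]
  have hD1' : D1 = i * q + J := by omega
  rw [hD1', ← hJ2]
  ring
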